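/- arXiv:2207.07521 — 3 statements merged into one kernel-verified Lean document; each statement's English description precedes it below -/
import Mathlib

section
/- Strong law of large numbers for renewal-reward processes: if E[S_1] < +∞ and E[‖X_1‖] < +∞, then W_t/t converges almost surely, as t → +∞, to μ := E[X_1]/E[S_1]. -/
open MeasureTheory ProbabilityTheory Filter Finset

lemma renewal_det {E : Type*} [NormedAddCommGroup E] [NormedSpace ℝ E]
    (s : ℕ → ℝ) (hs : ∀ n, 0 ≤ s n) (x : ℕ → E) (μ : ℝ) (hμ : 0 < μ) (L : E)
    (hT : Tendsto (fun n : ℕ => (n : ℝ)⁻¹ * ∑ i ∈ Finset.range n, s i) atTop (nhds μ))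
    (hX : Tendsto (fun n : ℕ => (n : ℝ)⁻¹ • ∑ i ∈ Finset.range n, x i) atTop (nhds L)) :
    Tendsto (fun t : ℝ =>
        t⁻¹ • ∑ i ∈ Finset.range (sSup {n : ℕ | ∑ j ∈ Finset.range n, s j ≤ t}), x i)
      atTop (nhds (μ⁻¹ • L)) := by
  set T : ℕ → ℝ := fun n => ∑ j ∈ Finset.range n, s j with hTdef
  set N : ℝ → ℕ := fun t => sSup {n : ℕ | T n ≤ t} with hNdef
  have hTtop : Tendsto T atTop atTop := by
    have h1 : Tendsto (fun n : ℕ => (n : ℝ) * ((n : ℝ)⁻¹ * T n)) atTop atTop :=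
      tendsto_natCast_atTop_atTop.atTop_mul_pos hμ hT
    apply h1.congr'
    filter_upwards [eventually_ge_atTop 1] with n hn
    have : (n : ℝ) ≠ 0 := by positivity
    field_simp
  have hbdd : ∀ t : ℝ, BddAbove {n : ℕ | T n ≤ t} := by
    intro t
    obtain ⟨M, hM⟩ := (tendsto_atTop.1 hTtop (t + 1)).exists_forall_of_atTop
    refine ⟨M, fun n hn => ?_⟩
    by_contra h
    push_neg at h
    exact absurd (hM n h.le) (by simp only [Set.mem_setOf_eq] at hn; linarith)
  have hmem : ∀ t : ℝ, 0 ≤ t → T (N t) ≤ t := by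
    intro t ht
    have : N t ∈ {n : ℕ | T n ≤ t} :=
      Nat.sSup_mem ⟨0, by simp [hTdef, ht]⟩ (hbdd t)
    exact this
  have hmem' : ∀ t : ℝ, t < T (N t + 1) := by
    intro t
    by_contra h
    push_neg at h
    have : N t + 1 ≤ N t := le_csSup (hbdd t) (by exact h)
    omega
  have hNmono : ∀ t n : ℝ → Prop, True := fun _ _ => trivial
  have hNtop : Tendsto N atTop atTop := by
    rw [tendsto_atTop]
    intro n
    filter_upwards [eventually_ge_atTop (T n)] with t ht
    exact le_csSup (hbdd t) ht
  have hNpos : ∀ᶠ t : ℝ in atTop, 1 ≤ N t := hNtop.eventually_ge_atTop 1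
  -- t / N t → μ
  have hg : Tendsto (fun n : ℕ => (n : ℝ)⁻¹ * T (n + 1)) atTop (nhds μ) := by
    have h1 : Tendsto (fun n : ℕ => ((n : ℝ) + 1) / n * (((n : ℝ) + 1)⁻¹ * T (n + 1)))
        atTop (nhds (1 * μ)) := by
      apply Tendsto.mul
      · have : Tendsto (fun n : ℕ => 1 + (n : ℝ)⁻¹) atTop (nhds (1 + 0)) :=
          tendsto_const_nhds.add tendsto_inv_atTop_nhds_zero_nat
        apply (by simpa using this : Tendsto (fun n : ℕ => 1 + (n:ℝ)⁻¹) atTop (nhds 1)).congr'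
        filter_upwards [eventually_ge_atTop 1] with n hn
        have : (n : ℝ) ≠ 0 := by positivity
        field_simp
      · have hcomp := hT.comp (tendsto_add_atTop_nat 1)
        apply hcomp.congr
        intro n
        simp only [Function.comp_apply, hTdef]
        push_cast
        ring_nf
    rw [one_mul] at h1
    apply h1.congr'
    filter_upwards [eventually_ge_atTop 1] with n hn
    have h0 : (n : ℝ) ≠ 0 := by positivity
    have h1 : ((n : ℝ) + 1) ≠ 0 := by positivity
    field_simp
  have hdiv : Tendsto (fun t : ℝ => t / (N t : ℝ)) atTop (nhds μ) := by
    have hlow : Tendsto (fun t : ℝ => ((N t : ℝ))⁻¹ * T (N t)) atTop (nhds μ) :=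
      hT.comp hNtop
    have hhigh : Tendsto (fun t : ℝ => ((N t : ℝ))⁻¹ * T (N t + 1)) atTop (nhds μ) :=
      hg.comp hNtop
    apply tendsto_of_tendsto_of_tendsto_of_le_of_le' hlow hhigh
    · filter_upwards [hNpos, eventually_ge_atTop (0:ℝ)] with t h1 h0
      have hNc : (0:ℝ) < (N t : ℝ) := by exact_mod_cast h1
      rw [div_eq_inv_mul]
      exact mul_le_mul_of_nonneg_left (hmem t h0) (by positivity)
    · filter_upwards [hNpos] with t h1
      have hNc : (0:ℝ) < (N t : ℝ) := by exact_mod_cast h1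
      rw [div_eq_inv_mul]
      exact mul_le_mul_of_nonneg_left (hmem' t).le (by positivity)
  have hratio : Tendsto (fun t : ℝ => (N t : ℝ) / t) atTop (nhds μ⁻¹) := by
    have := hdiv.inv₀ hμ.ne'
    apply this.congr'
    filter_upwards [hNpos, eventually_gt_atTop (0:ℝ)] with t h1 h0
    rw [inv_div]
  have havg : Tendsto (fun t : ℝ => ((N t : ℝ))⁻¹ • ∑ i ∈ Finset.range (N t), x i)
      atTop (nhds L) := hX.comp hNtop
  have hfin := hratio.smul havg
  apply hfin.congr'
  filter_upwards [hNpos, eventually_gt_atTop (0:ℝ)] with t h1 h0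
  have hNc : ((N t : ℝ)) ≠ 0 := by
    have : (0:ℝ) < (N t : ℝ) := by exact_mod_cast h1
    exact this.ne'
  rw [smul_smul]
  congr 1
  field_simp

/-- Strong law of large numbers for renewal-reward processes: if `E[S 1] < ∞` and
`E[‖X 1‖] < ∞`, then `W t / t → E[X 1] / E[S 1]` almost surely as `t → ∞`. -/
theorem renewal_reward_slln
    {Ω : Type*} [MeasurableSpace Ω] (P : Measure Ω) [IsProbabilityMeasure P]
    (d : ℕ) (hd : 1 ≤ d)
    (S : ℕ → Ω → ℝ) (X : ℕ → Ω → EuclideanSpace ℝ (Fin d))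
    -- waiting times are nonnegative
    (hSnn : ∀ n ω, 0 ≤ S n ω)
    -- the pairs (S n, X n) are independent ...
    (hindep : iIndepFun (fun n ω => (S n ω, X n ω)) P)
    -- ... and identically distributed
    (hident : ∀ n, IdentDistrib (fun ω => (S n ω, X n ω)) (fun ω => (S 0 ω, X 0 ω)) P P)
    -- the waiting times are not concentrated at zero
    (hS0 : P {ω | S 0 ω = 0} < 1)
    -- renewal times
    (T : ℕ → Ω → ℝ) (hT : ∀ n ω, T n ω = ∑ i ∈ Finset.range n, S i ω)
    -- number of renewals by time t
    (N : ℝ → Ω → ℕ) (hN : ∀ t ω, N t ω = sSup {n : ℕ | T n ω ≤ t})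
    -- cumulative reward
    (W : ℝ → Ω → EuclideanSpace ℝ (Fin d))
    (hW : ∀ t ω, W t ω = ∑ i ∈ Finset.range (N t ω), X i ω)
    -- moment conditions: E[S 1] < ∞ and E[‖X 1‖] < ∞
    (hSint : Integrable (S 0) P) (hXint : Integrable (X 0) P) :
    ∀ᵐ ω ∂P, Tendsto (fun t : ℝ => t⁻¹ • W t ω) atTop
      (nhds ((∫ ω, S 0 ω ∂P)⁻¹ • ∫ ω, X 0 ω ∂P)) := by
  -- independence and identical distribution of the marginals
  have hSi : iIndepFun S P := by
    have := hindep.comp (fun _ => (Prod.fst : ℝ × EuclideanSpace ℝ (Fin d) → ℝ))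
      (fun _ => measurable_fst)
    exact this
  have hXi : iIndepFun X P := by
    have := hindep.comp (fun _ => (Prod.snd : ℝ × EuclideanSpace ℝ (Fin d) → EuclideanSpace ℝ (Fin d)))
      (fun _ => measurable_snd)
    exact this
  have hSident : ∀ n, IdentDistrib (S n) (S 0) P P := fun n => (hident n).comp measurable_fst
  have hXident : ∀ n, IdentDistrib (X n) (X 0) P P := fun n => (hident n).comp measurable_snd
  have hSpair : Pairwise (Function.onFun (IndepFun · · P) S) := fun i j hij => hSi.indepFun hij
  have hXpair : Pairwise (Function.onFun (IndepFun · · P) X) := fun i j hij => hXi.indepFun hij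
  -- strong laws
  have hSslln := strong_law_ae_real S hSint hSpair hSident
  have hXslln := strong_law_ae X hXint hXpair hXident
  -- positivity of E[S 0]
  have hμpos : 0 < ∫ ω, S 0 ω ∂P := by
    rcases lt_or_eq_of_le (integral_nonneg (μ := P) (f := S 0) (fun ω => hSnn 0 ω)) with h | h
    · exact h
    · exfalso
      have hz : S 0 =ᵐ[P] 0 :=
        (integral_eq_zero_iff_of_nonneg (hSnn 0) hSint).1 h.symm
      have hnull : P {ω | S 0 ω = 0}ᶜ = 0 := by
        have := ae_iff.1 hz
        convert this using 2
        rfl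
      have hone : (1 : ENNReal) ≤ P {ω | S 0 ω = 0} := by
        calc (1 : ENNReal) = P Set.univ := (measure_univ).symm
          _ = P ({ω | S 0 ω = 0} ∪ {ω | S 0 ω = 0}ᶜ) := by rw [Set.union_compl_self]
          _ ≤ P {ω | S 0 ω = 0} + P {ω | S 0 ω = 0}ᶜ := measure_union_le _ _
          _ = P {ω | S 0 ω = 0} := by rw [hnull, add_zero]
      exact absurd (lt_of_le_of_lt hone hS0) (lt_irrefl _)
  filter_upwards [hSslln, hXslln] with ω hSω hXω
  have hSω' : Tendsto (fun n : ℕ => (n : ℝ)⁻¹ * ∑ i ∈ Finset.range n, S i ω) atTop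
      (nhds (∫ ω, S 0 ω ∂P)) := by
    apply hSω.congr
    intro n
    rw [div_eq_inv_mul]
  have key := renewal_det (fun n => S n ω) (fun n => hSnn n ω) (fun n => X n ω)
    (∫ ω, S 0 ω ∂P) hμpos (∫ ω, X 0 ω ∂P) hSω' hXω
  apply key.congr
  intro t
  rw [hW t ω, hN t ω]
  simp only [hT]
end

section
/- The function I defined by I(w) := inf_{β∈[0,1]} {Υ(β,w) + (1−β)ℓ} when ℓ < +∞, and I(w) := Υ(1,w) when ℓ = +∞, is lower semicontinuous and convex on ℝ^d. -/
open MeasureTheory ProbabilityTheory Filter RealInnerProductSpace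


private lemma J_nonneg {Ω : Type*} [MeasurableSpace Ω] (P : Measure Ω) [IsProbabilityMeasure P]
    {d : ℕ} (S : Ω → ℝ) (X : Ω → EuclideanSpace ℝ (Fin d)) (s : ℝ) (w : EuclideanSpace ℝ (Fin d)) :
    0 ≤ ⨆ p : ℝ × EuclideanSpace ℝ (Fin d),
      (((s * p.1 + ⟪w, p.2⟫ : ℝ) : EReal) -
        ENNReal.log (∫⁻ ω, ENNReal.ofReal (Real.exp (p.1 * S ω + ⟪p.2, X ω⟫)) ∂P)) := by
  refine le_trans ?_ (le_iSup _ ((0 : ℝ), (0 : EuclideanSpace ℝ (Fin d))))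
  simp [lintegral_one, measure_univ]


private lemma ereal_affine_conv (r1 r2 : ℝ) {a b : ℝ} (ha : 0 < a) (hb : 0 < b)
    (hab : a + b = 1) (L : EReal) :
    ((a * r1 + b * r2 : ℝ) : EReal) - L ≤
      (a : EReal) * ((r1 : EReal) - L) + (b : EReal) * ((r2 : EReal) - L) := by
  induction L with
  | bot =>
      have h1 : ((r1 : EReal) - ⊥) = ⊤ := by
        rw [sub_eq_add_neg, EReal.neg_bot, EReal.add_top_of_ne_bot (EReal.coe_ne_bot _)]
      have h2 : ((r2 : EReal) - ⊥) = ⊤ := by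
        rw [sub_eq_add_neg, EReal.neg_bot, EReal.add_top_of_ne_bot (EReal.coe_ne_bot _)]
      rw [h1, h2, EReal.coe_mul_top_of_pos ha, EReal.coe_mul_top_of_pos hb, EReal.top_add_top]
      exact le_top
  | coe l =>
      rw [← EReal.coe_sub, ← EReal.coe_sub, ← EReal.coe_sub, ← EReal.coe_mul, ← EReal.coe_mul,
        ← EReal.coe_add, EReal.coe_le_coe_iff]
      have : a * (r1 - l) + b * (r2 - l) = a * r1 + b * r2 - (a + b) * l := by ring
      rw [this, hab, one_mul]
  | top =>
      have h1 : ((a * r1 + b * r2 : ℝ) : EReal) - ⊤ = ⊥ := by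
        rw [sub_eq_add_neg, EReal.neg_top, EReal.add_bot]
      rw [h1]
      exact bot_le

private lemma J_convex {Ω : Type*} [MeasurableSpace Ω] (P : Measure Ω)
    {d : ℕ} (S : Ω → ℝ) (X : Ω → EuclideanSpace ℝ (Fin d))
    (J : ℝ → EuclideanSpace ℝ (Fin d) → EReal)
    (hJ : ∀ s w, J s w = ⨆ p : ℝ × EuclideanSpace ℝ (Fin d),
      (((s * p.1 + ⟪w, p.2⟫ : ℝ) : EReal) -
        ENNReal.log (∫⁻ ω, ENNReal.ofReal (Real.exp (p.1 * S ω + ⟪p.2, X ω⟫)) ∂P)))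
    (s1 s2 : ℝ) (w1 w2 : EuclideanSpace ℝ (Fin d)) {a b : ℝ}
    (ha : 0 < a) (hb : 0 < b) (hab : a + b = 1) :
    J (a * s1 + b * s2) (a • w1 + b • w2) ≤
      (a : EReal) * J s1 w1 + (b : EReal) * J s2 w2 := by
  rw [hJ, hJ, hJ]
  refine iSup_le fun p => ?_
  set L : EReal := ENNReal.log (∫⁻ ω, ENNReal.ofReal (Real.exp (p.1 * S ω + ⟪p.2, X ω⟫)) ∂P)
    with hL
  have harg : ((a * s1 + b * s2) * p.1 + ⟪a • w1 + b • w2, p.2⟫ : ℝ)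
      = a * (s1 * p.1 + ⟪w1, p.2⟫) + b * (s2 * p.1 + ⟪w2, p.2⟫) := by
    rw [inner_add_left, real_inner_smul_left, real_inner_smul_left]; ring
  rw [harg]
  refine le_trans (ereal_affine_conv _ _ ha hb hab L) ?_
  gcongr
  · exact le_iSup (fun q : ℝ × EuclideanSpace ℝ (Fin d) =>
      ((s1 * q.1 + ⟪w1, q.2⟫ : ℝ) : EReal) -
        ENNReal.log (∫⁻ ω, ENNReal.ofReal (Real.exp (q.1 * S ω + ⟪q.2, X ω⟫)) ∂P)) p
  · exact le_iSup (fun q : ℝ × EuclideanSpace ℝ (Fin d) =>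
      ((s2 * q.1 + ⟪w2, q.2⟫ : ℝ) : EReal) -
        ENNReal.log (∫⁻ ω, ENNReal.ofReal (Real.exp (q.1 * S ω + ⟪q.2, X ω⟫)) ∂P)) p


private noncomputable def Gfun {d : ℕ} (J : ℝ → EuclideanSpace ℝ (Fin d) → EReal)
    (δ β : ℝ) (w : EuclideanSpace ℝ (Fin d)) : EReal :=
  ⨅ (s : ℝ) (_ : s ∈ Set.Ioo (β - δ) (β + δ)),
    ⨅ (v : EuclideanSpace ℝ (Fin d)) (_ : v ∈ Metric.ball w δ),
      ⨅ (γ : ℝ) (_ : 0 < γ), (γ : EReal) * J (s / γ) (γ⁻¹ • v)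

private lemma Gfun_nonneg {d : ℕ} {J : ℝ → EuclideanSpace ℝ (Fin d) → EReal}
    (hJnn : ∀ s w, 0 ≤ J s w) (δ β : ℝ) (w : EuclideanSpace ℝ (Fin d)) :
    0 ≤ Gfun J δ β w := by
  refine le_iInf fun s => le_iInf fun _ => le_iInf fun v => le_iInf fun _ =>
    le_iInf fun γ => le_iInf fun hγ => ?_
  exact mul_nonneg (EReal.coe_nonneg.mpr hγ.le) (hJnn _ _)

private lemma Gfun_le_term {d : ℕ} (J : ℝ → EuclideanSpace ℝ (Fin d) → EReal)
    {δ β : ℝ} {w : EuclideanSpace ℝ (Fin d)} {s : ℝ} (hs : s ∈ Set.Ioo (β - δ) (β + δ))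
    {v : EuclideanSpace ℝ (Fin d)} (hv : v ∈ Metric.ball w δ) {γ : ℝ} (hγ : 0 < γ) :
    Gfun J δ β w ≤ (γ : EReal) * J (s / γ) (γ⁻¹ • v) :=
  iInf₂_le_of_le s hs (iInf₂_le_of_le v hv (iInf₂_le γ hγ))

private lemma Gfun_lt_iff' {d : ℕ} (J : ℝ → EuclideanSpace ℝ (Fin d) → EReal)
    {δ β : ℝ} {w : EuclideanSpace ℝ (Fin d)} {c : EReal} (h : Gfun J δ β w < c) :
    ∃ s : ℝ, s ∈ Set.Ioo (β - δ) (β + δ) ∧ ∃ v : EuclideanSpace ℝ (Fin d),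
      v ∈ Metric.ball w δ ∧ ∃ γ : ℝ, 0 < γ ∧
      (γ : EReal) * J (s / γ) (γ⁻¹ • v) < c := by
  rw [Gfun] at h
  obtain ⟨s, h⟩ := iInf_lt_iff.mp h
  obtain ⟨hs, h⟩ := iInf_lt_iff.mp h
  obtain ⟨v, h⟩ := iInf_lt_iff.mp h
  obtain ⟨hv, h⟩ := iInf_lt_iff.mp h
  obtain ⟨γ, h⟩ := iInf_lt_iff.mp h
  obtain ⟨hγ, h⟩ := iInf_lt_iff.mp h
  exact ⟨s, hs, v, hv, γ, hγ, h⟩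

private lemma perspective_ineq' {d : ℕ} (J : ℝ → EuclideanSpace ℝ (Fin d) → EReal)
    (hJnn : ∀ s w, 0 ≤ J s w)
    (hJconv : ∀ (s1 s2 : ℝ) (w1 w2 : EuclideanSpace ℝ (Fin d)) {a b : ℝ},
      0 < a → 0 < b → a + b = 1 →
      J (a * s1 + b * s2) (a • w1 + b • w2) ≤ (a : EReal) * J s1 w1 + (b : EReal) * J s2 w2)
    (s1 s2 : ℝ) (v1 v2 : EuclideanSpace ℝ (Fin d)) {a b γ1 γ2 : ℝ}
    (ha : 0 < a) (hb : 0 < b) (hγ1 : 0 < γ1) (hγ2 : 0 < γ2) :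
    ((a * γ1 + b * γ2 : ℝ) : EReal) *
        J ((a * s1 + b * s2) / (a * γ1 + b * γ2)) ((a * γ1 + b * γ2)⁻¹ • (a • v1 + b • v2)) ≤
      (a : EReal) * ((γ1 : EReal) * J (s1 / γ1) (γ1⁻¹ • v1)) +
        (b : EReal) * ((γ2 : EReal) * J (s2 / γ2) (γ2⁻¹ • v2)) := by
  have hγ : 0 < a * γ1 + b * γ2 := by positivity
  have hγ' : a * γ1 + b * γ2 ≠ 0 := hγ.ne'
  have hγ1' : γ1 ≠ 0 := hγ1.ne'
  have hγ2' : γ2 ≠ 0 := hγ2.ne'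
  have hlam0 : 0 < a * γ1 / (a * γ1 + b * γ2) := by positivity
  have hmu0 : 0 < b * γ2 / (a * γ1 + b * γ2) := by positivity
  have hlm : a * γ1 / (a * γ1 + b * γ2) + b * γ2 / (a * γ1 + b * γ2) = 1 := by
    field_simp
  have harg1 : (a * γ1 / (a * γ1 + b * γ2)) * (s1 / γ1) +
      (b * γ2 / (a * γ1 + b * γ2)) * (s2 / γ2) = (a * s1 + b * s2) / (a * γ1 + b * γ2) := by
    field_simp
  have harg2 : (a * γ1 / (a * γ1 + b * γ2)) • (γ1⁻¹ • v1) +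
      (b * γ2 / (a * γ1 + b * γ2)) • (γ2⁻¹ • v2) =
      (a * γ1 + b * γ2)⁻¹ • (a • v1 + b • v2) := by
    rw [smul_add, smul_smul, smul_smul, smul_smul, smul_smul]
    congr 1 <;> congr 1 <;> field_simp <;> ring
  have key := hJconv (s1 / γ1) (s2 / γ2) (γ1⁻¹ • v1) (γ2⁻¹ • v2) hlam0 hmu0 hlm
  rw [harg1, harg2] at key
  have step1 : ((a * γ1 + b * γ2 : ℝ) : EReal) *
      J ((a * s1 + b * s2) / (a * γ1 + b * γ2)) ((a * γ1 + b * γ2)⁻¹ • (a • v1 + b • v2)) ≤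
      ((a * γ1 + b * γ2 : ℝ) : EReal) *
        (((a * γ1 / (a * γ1 + b * γ2) : ℝ) : EReal) * J (s1 / γ1) (γ1⁻¹ • v1) +
          ((b * γ2 / (a * γ1 + b * γ2) : ℝ) : EReal) * J (s2 / γ2) (γ2⁻¹ • v2)) :=
    mul_le_mul_of_nonneg_left key (EReal.coe_nonneg.mpr hγ.le)
  refine step1.trans (le_of_eq ?_)
  rw [EReal.left_distrib_of_nonneg
      (mul_nonneg (EReal.coe_nonneg.mpr hlam0.le) (hJnn _ _))
      (mul_nonneg (EReal.coe_nonneg.mpr hmu0.le) (hJnn _ _)),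
    ← mul_assoc, ← mul_assoc, ← EReal.coe_mul, ← EReal.coe_mul]
  have e1 : (a * γ1 + b * γ2) * (a * γ1 / (a * γ1 + b * γ2)) = a * γ1 := by field_simp
  have e2 : (a * γ1 + b * γ2) * (b * γ2 / (a * γ1 + b * γ2)) = b * γ2 := by field_simp
  rw [e1, e2, EReal.coe_mul, EReal.coe_mul, mul_assoc, mul_assoc]

private lemma Upsilon_convex {d : ℕ} {J : ℝ → EuclideanSpace ℝ (Fin d) → EReal}
    {Υ : ℝ → EuclideanSpace ℝ (Fin d) → EReal}
    (hΥ : ∀ β w, Υ β w = ⨆ (δ : ℝ) (_ : 0 < δ), Gfun J δ β w)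
    (hJnn : ∀ s w, 0 ≤ J s w)
    (hJconv : ∀ (s1 s2 : ℝ) (w1 w2 : EuclideanSpace ℝ (Fin d)) {a b : ℝ},
      0 < a → 0 < b → a + b = 1 →
      J (a * s1 + b * s2) (a • w1 + b • w2) ≤ (a : EReal) * J s1 w1 + (b : EReal) * J s2 w2)
    (β1 β2 : ℝ) (w1 w2 : EuclideanSpace ℝ (Fin d)) {a b : ℝ}
    (ha : 0 < a) (hb : 0 < b) (hab : a + b = 1) :
    Υ (a * β1 + b * β2) (a • w1 + b • w2) ≤
      (a : EReal) * Υ β1 w1 + (b : EReal) * Υ β2 w2 := by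
  rw [hΥ]
  refine iSup₂_le fun δ hδ => ?_
  have hG1 : Gfun J δ β1 w1 ≤ Υ β1 w1 := by
    rw [hΥ]; exact le_iSup₂ (f := fun δ (_ : (0:ℝ) < δ) => Gfun J δ β1 w1) δ hδ
  have hG2 : Gfun J δ β2 w2 ≤ Υ β2 w2 := by
    rw [hΥ]; exact le_iSup₂ (f := fun δ (_ : (0:ℝ) < δ) => Gfun J δ β2 w2) δ hδ
  suffices core : Gfun J δ (a * β1 + b * β2) (a • w1 + b • w2) ≤
      (a : EReal) * Gfun J δ β1 w1 + (b : EReal) * Gfun J δ β2 w2 by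
    exact core.trans (add_le_add (mul_le_mul_of_nonneg_left hG1 (EReal.coe_nonneg.mpr ha.le))
      (mul_le_mul_of_nonneg_left hG2 (EReal.coe_nonneg.mpr hb.le)))
  refine EReal.le_of_forall_lt_iff_le.mp fun z hz => ?_
  -- the two pieces are nonnegative and finite
  have hG1nn : (0 : EReal) ≤ Gfun J δ β1 w1 := Gfun_nonneg hJnn δ β1 w1
  have hG2nn : (0 : EReal) ≤ Gfun J δ β2 w2 := Gfun_nonneg hJnn δ β2 w2
  have hG1top : Gfun J δ β1 w1 ≠ ⊤ := by
    intro h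
    rw [h, EReal.coe_mul_top_of_pos ha, EReal.top_add_of_ne_bot
      (ne_bot_of_le_ne_bot (by simp) (mul_nonneg (EReal.coe_nonneg.mpr hb.le) hG2nn))] at hz
    exact not_top_lt hz
  have hG2top : Gfun J δ β2 w2 ≠ ⊤ := by
    intro h
    rw [h, EReal.coe_mul_top_of_pos hb, EReal.add_top_of_ne_bot
      (ne_bot_of_le_ne_bot (by simp) (mul_nonneg (EReal.coe_nonneg.mpr ha.le) hG1nn))] at hz
    exact not_top_lt hz
  have hG1bot : Gfun J δ β1 w1 ≠ ⊥ := ne_bot_of_le_ne_bot (by simp) hG1nn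
  have hG2bot : Gfun J δ β2 w2 ≠ ⊥ := ne_bot_of_le_ne_bot (by simp) hG2nn
  set g1 : ℝ := (Gfun J δ β1 w1).toReal with hg1def
  set g2 : ℝ := (Gfun J δ β2 w2).toReal with hg2def
  have hg1 : (g1 : EReal) = Gfun J δ β1 w1 := EReal.coe_toReal hG1top hG1bot
  have hg2 : (g2 : EReal) = Gfun J δ β2 w2 := EReal.coe_toReal hG2top hG2bot
  rw [← hg1, ← hg2, ← EReal.coe_mul, ← EReal.coe_mul, ← EReal.coe_add,
    EReal.coe_lt_coe_iff] at hz
  set ε : ℝ := (z - (a * g1 + b * g2)) / 2 with hεdef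
  have hε : 0 < ε := by simp only [hεdef]; linarith
  have h1 : Gfun J δ β1 w1 < ((g1 + ε : ℝ) : EReal) := by
    rw [← hg1]; exact EReal.coe_lt_coe_iff.mpr (by linarith)
  have h2 : Gfun J δ β2 w2 < ((g2 + ε : ℝ) : EReal) := by
    rw [← hg2]; exact EReal.coe_lt_coe_iff.mpr (by linarith)
  obtain ⟨s1, hs1, v1, hv1, γ1, hγ1, ht1⟩ := Gfun_lt_iff' J h1
  obtain ⟨s2, hs2, v2, hv2, γ2, hγ2, ht2⟩ := Gfun_lt_iff' J h2
  have hδab : a * δ + b * δ = δ := by rw [← add_mul, hab, one_mul]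
  have hsmem : a * s1 + b * s2 ∈
      Set.Ioo ((a * β1 + b * β2) - δ) ((a * β1 + b * β2) + δ) := by
    obtain ⟨h1l, h1r⟩ := hs1
    obtain ⟨h2l, h2r⟩ := hs2
    have p1 := mul_lt_mul_of_pos_left h1l ha
    have p2 := mul_lt_mul_of_pos_left h2l hb
    have p3 := mul_lt_mul_of_pos_left h1r ha
    have p4 := mul_lt_mul_of_pos_left h2r hb
    constructor <;> nlinarith
  have hvmem : a • v1 + b • v2 ∈ Metric.ball (a • w1 + b • w2) δ := by
    rw [Metric.mem_ball, dist_eq_norm]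
    have hvec : (a • v1 + b • v2) - (a • w1 + b • w2) = a • (v1 - w1) + b • (v2 - w2) := by
      rw [smul_sub, smul_sub]; abel
    rw [hvec]
    have hn1 : ‖v1 - w1‖ < δ := by rw [← dist_eq_norm]; exact Metric.mem_ball.mp hv1
    have hn2 : ‖v2 - w2‖ < δ := by rw [← dist_eq_norm]; exact Metric.mem_ball.mp hv2
    calc ‖a • (v1 - w1) + b • (v2 - w2)‖ ≤ ‖a • (v1 - w1)‖ + ‖b • (v2 - w2)‖ := norm_add_le _ _
      _ = a * ‖v1 - w1‖ + b * ‖v2 - w2‖ := by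
          rw [norm_smul, norm_smul, Real.norm_eq_abs, Real.norm_eq_abs,
            abs_of_pos ha, abs_of_pos hb]
      _ < a * δ + b * δ :=
          add_lt_add (mul_lt_mul_of_pos_left hn1 ha) (mul_lt_mul_of_pos_left hn2 hb)
      _ = δ := hδab
  have hγc : (0 : ℝ) < a * γ1 + b * γ2 := by positivity
  calc Gfun J δ (a * β1 + b * β2) (a • w1 + b • w2)
      ≤ ((a * γ1 + b * γ2 : ℝ) : EReal) * J ((a * s1 + b * s2) / (a * γ1 + b * γ2))
          ((a * γ1 + b * γ2)⁻¹ • (a • v1 + b • v2)) := Gfun_le_term J hsmem hvmem hγc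
    _ ≤ (a : EReal) * ((γ1 : EReal) * J (s1 / γ1) (γ1⁻¹ • v1)) +
          (b : EReal) * ((γ2 : EReal) * J (s2 / γ2) (γ2⁻¹ • v2)) :=
        perspective_ineq' J hJnn hJconv s1 s2 v1 v2 ha hb hγ1 hγ2
    _ ≤ (a : EReal) * ((g1 + ε : ℝ) : EReal) + (b : EReal) * ((g2 + ε : ℝ) : EReal) :=
        add_le_add (mul_le_mul_of_nonneg_left ht1.le (EReal.coe_nonneg.mpr ha.le))
          (mul_le_mul_of_nonneg_left ht2.le (EReal.coe_nonneg.mpr hb.le))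
    _ = ((a * (g1 + ε) + b * (g2 + ε) : ℝ) : EReal) := by
        rw [← EReal.coe_mul, ← EReal.coe_mul, ← EReal.coe_add]
    _ ≤ (z : EReal) := by
        refine EReal.coe_le_coe_iff.mpr ?_
        have : a * ε + b * ε = ε := by rw [← add_mul, hab, one_mul]
        nlinarith

private lemma Upsilon_nonneg {d : ℕ} {J : ℝ → EuclideanSpace ℝ (Fin d) → EReal}
    {Υ : ℝ → EuclideanSpace ℝ (Fin d) → EReal}
    (hΥ : ∀ β w, Υ β w = ⨆ (δ : ℝ) (_ : 0 < δ), Gfun J δ β w)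
    (hGnn : ∀ δ β w, 0 ≤ Gfun J δ β w) (β : ℝ) (w : EuclideanSpace ℝ (Fin d)) :
    0 ≤ Υ β w := by
  rw [hΥ]
  exact le_trans (hGnn 1 β w) (le_iSup₂ (f := fun δ (_ : (0:ℝ) < δ) => Gfun J δ β w) 1 one_pos)

private lemma Upsilon_lsc {d : ℕ} {J : ℝ → EuclideanSpace ℝ (Fin d) → EReal}
    {Υ : ℝ → EuclideanSpace ℝ (Fin d) → EReal}
    (hΥ : ∀ β w, Υ β w = ⨆ (δ : ℝ) (_ : 0 < δ), Gfun J δ β w)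
    {β : ℝ} {w : EuclideanSpace ℝ (Fin d)} {y : EReal} (hy : y < Υ β w) :
    ∃ δ : ℝ, 0 < δ ∧ ∀ β' w', |β' - β| < δ → dist w' w < δ → y < Υ β' w' := by
  rw [hΥ] at hy
  obtain ⟨δ, hy⟩ := lt_iSup_iff.mp hy
  obtain ⟨hδ, hy⟩ := lt_iSup_iff.mp hy
  refine ⟨δ / 2, by positivity, fun β' w' hβ' hw' => ?_⟩
  obtain ⟨hβ'1, hβ'2⟩ := abs_lt.mp hβ'
  have hsub1 : Set.Ioo (β' - δ / 2) (β' + δ / 2) ⊆ Set.Ioo (β - δ) (β + δ) := by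
    intro t ht
    obtain ⟨ht1, ht2⟩ := ht
    exact ⟨by linarith, by linarith⟩
  have hsub2 : Metric.ball w' (δ / 2) ⊆ Metric.ball w δ :=
    Metric.ball_subset_ball' (by linarith [dist_nonneg (x := w') (y := w)])
  have hmono : Gfun J δ β w ≤ Gfun J (δ / 2) β' w' := by
    refine le_iInf fun s => le_iInf fun hs => le_iInf fun v => le_iInf fun hv =>
      le_iInf fun γ => le_iInf fun hγ => ?_
    exact iInf₂_le_of_le s (hsub1 hs) (iInf₂_le_of_le v (hsub2 hv) (iInf₂_le γ hγ))
  calc y < Gfun J δ β w := hy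
    _ ≤ Gfun J (δ / 2) β' w' := hmono
    _ ≤ Υ β' w' := by
        rw [hΥ]
        exact le_iSup₂ (f := fun δ (_ : (0:ℝ) < δ) => Gfun J δ β' w') (δ / 2) (by positivity)


private lemma ereal_sub_lt_iff {u : EReal} {r t : ℝ} :
    ((r - t : ℝ) : EReal) < u ↔ (r : EReal) < u + (t : ℝ) := by
  induction u with
  | bot => simp
  | coe l =>
      rw [← EReal.coe_add, EReal.coe_lt_coe_iff, EReal.coe_lt_coe_iff, sub_lt_iff_lt_add]
  | top =>
      rw [EReal.top_add_of_ne_bot (EReal.coe_ne_bot t)]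
      exact ⟨fun _ => EReal.coe_lt_top _, fun _ => EReal.coe_lt_top _⟩

private lemma I_lsc_finite {d : ℕ} {Υ : ℝ → EuclideanSpace ℝ (Fin d) → EReal}
    (hΥnn : ∀ β w, 0 ≤ Υ β w)
    (hΥlsc : ∀ β w (y : EReal), y < Υ β w →
      ∃ δ : ℝ, 0 < δ ∧ ∀ β' w', |β' - β| < δ → dist w' w < δ → y < Υ β' w')
    (c : ℝ) (hc : 0 ≤ c)
    (I : EuclideanSpace ℝ (Fin d) → EReal)
    (hI : ∀ w, I w = ⨅ (β : ℝ) (_ : β ∈ Set.Icc (0:ℝ) 1),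
      Υ β w + (((1 - β) * c : ℝ) : EReal)) :
    LowerSemicontinuous I := by
  have hInn : ∀ w', 0 ≤ I w' := by
    intro w'
    rw [hI]
    refine le_iInf fun β => le_iInf fun hβ => add_nonneg (hΥnn β w')
      (EReal.coe_nonneg.mpr (mul_nonneg (by linarith [hβ.2]) hc))
  intro w y hy
  by_cases hybot : y = ⊥
  · subst hybot
    exact Eventually.of_forall fun w' => lt_of_lt_of_le (by simp) (hInn w')
  have hytop : y ≠ ⊤ := hy.ne_top
  set y₀ : ℝ := y.toReal with hy₀def
  have hy₀ : (y₀ : EReal) = y := EReal.coe_toReal hytop hybot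
  obtain ⟨y₁, hy₁l, hy₁r⟩ := exists_between hy
  have hy₁bot : y₁ ≠ ⊥ := ne_bot_of_gt hy₁l
  have hy₁top : y₁ ≠ ⊤ := hy₁r.ne_top
  set t₁ : ℝ := y₁.toReal with ht₁def
  have ht₁ : (t₁ : EReal) = y₁ := EReal.coe_toReal hy₁top hy₁bot
  have hy₀t₁ : y₀ < t₁ := by
    rw [← EReal.coe_lt_coe_iff]; rw [hy₀, ht₁]; exact hy₁l
  set y₂ : ℝ := (y₀ + t₁) / 2 with hy₂def
  have hy₂1 : y₀ < y₂ := by simp only [hy₂def]; linarith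
  have hy₂2 : y₂ < t₁ := by simp only [hy₂def]; linarith
  set η : ℝ := t₁ - y₂ with hηdef
  have hη : 0 < η := by simp only [hηdef]; linarith
  -- per-β neighborhoods
  have claim : ∀ β : Set.Icc (0:ℝ) 1, ∃ ρ : ℝ, 0 < ρ ∧ ∀ β' w', |β' - (β:ℝ)| < ρ →
      dist w' w < ρ → (y₂ : EReal) < Υ β' w' + (((1 - β') * c : ℝ) : EReal) := by
    rintro ⟨β, hβ⟩
    have hterm : (t₁ : EReal) < Υ β w + (((1 - β) * c : ℝ) : EReal) := by
      refine lt_of_lt_of_le (ht₁ ▸ hy₁r) ?_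
      rw [hI]
      exact iInf₂_le β hβ
    have hsub : (((t₁ - (1 - β) * c : ℝ)) : EReal) < Υ β w := ereal_sub_lt_iff.mpr hterm
    obtain ⟨δβ, hδβ, hδ⟩ := hΥlsc β w _ hsub
    refine ⟨min δβ (η / (c + 1)), lt_min hδβ (by positivity), fun β' w' hβ' hw' => ?_⟩
    have h1 : ((t₁ - (1 - β) * c : ℝ) : EReal) < Υ β' w' :=
      hδ β' w' (hβ'.trans_le (min_le_left _ _)) (hw'.trans_le (min_le_left _ _))
    have hβ'2 : |β' - β| < η / (c + 1) := hβ'.trans_le (min_le_right _ _)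
    have hreal : y₂ < (t₁ - (1 - β) * c) + (1 - β') * c := by
      have habs := abs_lt.mp hβ'2
      have hc1 : (0:ℝ) < c + 1 := by linarith
      have e1 : (β' - β) * c ≤ (η / (c + 1)) * c :=
        mul_le_mul_of_nonneg_right habs.2.le hc
      have e2 : (η / (c + 1)) * c < η := by
        rw [div_mul_eq_mul_div, div_lt_iff₀ hc1]
        nlinarith
      have hy2 : y₂ = t₁ - η := by simp only [hηdef]; ring
      nlinarith
    calc (y₂ : EReal) < (((t₁ - (1 - β) * c) + (1 - β') * c : ℝ) : EReal) :=
          EReal.coe_lt_coe_iff.mpr hreal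
      _ ≤ Υ β' w' + (((1 - β') * c : ℝ) : EReal) := by
          rw [EReal.coe_add]
          exact add_le_add h1.le le_rfl
  choose ρ hρpos hρ using claim
  have hcover : Set.Icc (0:ℝ) 1 ⊆ ⋃ i : Set.Icc (0:ℝ) 1, Metric.ball (i : ℝ) (ρ i) := by
    intro x hx
    exact Set.mem_iUnion.mpr ⟨⟨x, hx⟩, Metric.mem_ball_self (hρpos ⟨x, hx⟩)⟩
  obtain ⟨F, hF⟩ := isCompact_Icc.elim_finite_subcover _ (fun i => Metric.isOpen_ball) hcover
  have hFne : F.Nonempty := by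
    by_contra hne
    rw [Finset.not_nonempty_iff_eq_empty] at hne
    have := hF (Set.mem_Icc.mpr ⟨le_refl 0, zero_le_one⟩)
    simp [hne] at this
  set δ : ℝ := F.inf' hFne ρ with hδdef
  have hδpos : 0 < δ := by
    rw [hδdef, Finset.lt_inf'_iff]
    exact fun i _ => hρpos i
  filter_upwards [Metric.ball_mem_nhds w hδpos] with w' hw'
  rw [hI]
  rw [← hy₀]
  refine lt_of_lt_of_le (EReal.coe_lt_coe_iff.mpr hy₂1) (le_iInf fun β' => le_iInf fun hβ' => ?_)
  obtain ⟨i, hiF, hyball⟩ := Set.mem_iUnion₂.mp (hF hβ')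
  have h1 : |β' - (i : ℝ)| < ρ i := by
    rw [← Real.dist_eq]; exact hyball
  have h2 : dist w' w < ρ i := hw'.trans_le (Finset.inf'_le _ hiF)
  exact (hρ i β' w' h1 h2).le
/-- The rate function `I` built from the lower-semicontinuous regularization `Υ` of
`inf_{γ>0} γ J(·/γ, ·/γ)`, where `J` is the joint Cramér rate function of waiting times and
rewards, is lower semicontinuous and convex. -/
theorem rate_function_lsc_convex
    {Ω : Type*} [MeasurableSpace Ω] (P : Measure Ω) [IsProbabilityMeasure P]
    (d : ℕ) (hd : 1 ≤ d)
    (S : ℕ → Ω → ℝ) (X : ℕ → Ω → EuclideanSpace ℝ (Fin d))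
    -- waiting times are nonnegative
    (hSnn : ∀ n ω, 0 ≤ S n ω)
    -- the pairs (S n, X n) are independent and identically distributed
    (hindep : iIndepFun (fun n ω => (S n ω, X n ω)) P)
    (hident : ∀ n, IdentDistrib (fun ω => (S n ω, X n ω)) (fun ω => (S 0 ω, X 0 ω)) P P)
    (hS0 : P {ω | S 0 ω = 0} < 1)
    -- ℓ := lim_{s → ∞} -(1/s) ln P[S 1 > s] exists in [0, ∞]
    (ℓ : EReal)
    (hℓ : Tendsto (fun s : ℝ => ((-s⁻¹ : ℝ) : EReal) * ENNReal.log (P {ω | s < S 0 ω}))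
      atTop (nhds ℓ))
    -- the joint Cramér rate function J of waiting times and rewards
    (J : ℝ → EuclideanSpace ℝ (Fin d) → EReal)
    (hJ : ∀ s w, J s w = ⨆ p : ℝ × EuclideanSpace ℝ (Fin d),
      (((s * p.1 + ⟪w, p.2⟫ : ℝ) : EReal) -
        ENNReal.log (∫⁻ ω, ENNReal.ofReal (Real.exp (p.1 * S 0 ω + ⟪p.2, X 0 ω⟫)) ∂P)))
    -- Υ: the lower-semicontinuous regularization of inf_{γ>0} γ J(·/γ, ·/γ),
    -- i.e. the monotone limit as δ ↓ 0 of local infima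
    (Υ : ℝ → EuclideanSpace ℝ (Fin d) → EReal)
    (hΥ : ∀ β w, Υ β w = ⨆ (δ : ℝ) (_ : 0 < δ),
      ⨅ (s : ℝ) (_ : s ∈ Set.Ioo (β - δ) (β + δ)),
        ⨅ (v : EuclideanSpace ℝ (Fin d)) (_ : v ∈ Metric.ball w δ),
          ⨅ (γ : ℝ) (_ : 0 < γ), (γ : EReal) * J (s / γ) (γ⁻¹ • v))
    -- the rate function I
    (I : EuclideanSpace ℝ (Fin d) → EReal)
    (hI : ℓ ≠ ⊤ → ∀ w, I w =
      ⨅ (β : ℝ) (_ : β ∈ Set.Icc (0 : ℝ) 1), Υ β w + ((1 - β : ℝ) : EReal) * ℓ)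
    (hI' : ℓ = ⊤ → ∀ w, I w = Υ 1 w) :
    -- conclusion: I is lower semicontinuous and convex
    LowerSemicontinuous I ∧
      ∀ x y : EuclideanSpace ℝ (Fin d), ∀ a b : ℝ, 0 ≤ a → 0 ≤ b → a + b = 1 →
        I (a • x + b • y) ≤ ((a : ℝ) : EReal) * I x + ((b : ℝ) : EReal) * I y := by
  -- basic facts about `J`, `Υ` and `ℓ`
  have hJnn : ∀ s w, 0 ≤ J s w := fun s w => by
    rw [hJ]; exact J_nonneg P (S 0) (X 0) s w
  have hJconv : ∀ (s1 s2 : ℝ) (w1 w2 : EuclideanSpace ℝ (Fin d)) {a b : ℝ},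
      0 < a → 0 < b → a + b = 1 →
      J (a * s1 + b * s2) (a • w1 + b • w2) ≤ (a : EReal) * J s1 w1 + (b : EReal) * J s2 w2 :=
    fun s1 s2 w1 w2 a b ha hb hab => J_convex P (S 0) (X 0) J hJ s1 s2 w1 w2 ha hb hab
  have hΥ' : ∀ β w, Υ β w = ⨆ (δ : ℝ) (_ : 0 < δ), Gfun J δ β w := hΥ
  have hΥnn : ∀ β w, 0 ≤ Υ β w :=
    Upsilon_nonneg hΥ' (fun δ β w => Gfun_nonneg hJnn δ β w)
  have hℓnn : (0 : EReal) ≤ ℓ := by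
    refine ge_of_tendsto hℓ ?_
    filter_upwards [eventually_ge_atTop (1 : ℝ)] with s hs
    have hsinv : (0 : ℝ) ≤ s⁻¹ := inv_nonneg.mpr (by linarith)
    have hlog : ENNReal.log (P {ω | s < S 0 ω}) ≤ 0 :=
      ENNReal.log_le_zero_iff.mpr prob_le_one
    have hrw : ((-s⁻¹ : ℝ) : EReal) * ENNReal.log (P {ω | s < S 0 ω}) =
        ((s⁻¹ : ℝ) : EReal) * (-(ENNReal.log (P {ω | s < S 0 ω}))) := by
      rw [EReal.coe_neg, neg_mul, ← mul_neg]
    rw [hrw]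
    refine mul_nonneg (EReal.coe_nonneg.mpr hsinv) ?_
    rw [← neg_zero, EReal.neg_le_neg_iff]
    exact hlog
  by_cases hℓtop : ℓ = ⊤
  · -- infinite case : `I w = Υ 1 w`
    constructor
    · intro w y hy
      rw [hI' hℓtop] at hy
      obtain ⟨δ, hδ, hδ2⟩ := Upsilon_lsc hΥ' hy
      filter_upwards [Metric.ball_mem_nhds w hδ] with w' hw'
      rw [hI' hℓtop]
      exact hδ2 1 w' (by simpa using hδ) hw'
    · intro x y a b ha0 hb0 hab
      rcases eq_or_lt_of_le ha0 with ha | ha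
      · have hb1 : b = 1 := by linarith
        subst hb1
        rw [← ha]
        simp
      rcases eq_or_lt_of_le hb0 with hb | hb
      · have ha1 : a = 1 := by linarith
        subst ha1
        rw [← hb]
        simp
      have h11 : a * 1 + b * 1 = 1 := by linarith
      calc I (a • x + b • y) = Υ (a * 1 + b * 1) (a • x + b • y) := by
            rw [hI' hℓtop, h11]
        _ ≤ (a : EReal) * Υ 1 x + (b : EReal) * Υ 1 y :=
            Upsilon_convex hΥ' hJnn hJconv 1 1 x y ha hb hab
        _ = (a : EReal) * I x + (b : EReal) * I y := by
            rw [hI' hℓtop x, hI' hℓtop y]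
  · -- finite case : `I w = ⨅ β ∈ [0,1], Υ β w + (1-β) ℓ`
    have hℓbot : ℓ ≠ ⊥ := ne_bot_of_le_ne_bot (by simp) hℓnn
    set c : ℝ := ℓ.toReal with hcdef
    have hcc : (c : EReal) = ℓ := EReal.coe_toReal hℓtop hℓbot
    have hc0 : 0 ≤ c := EReal.coe_nonneg.mp (hcc ▸ hℓnn)
    have hI2 : ∀ w, I w = ⨅ (β : ℝ) (_ : β ∈ Set.Icc (0:ℝ) 1),
        Υ β w + (((1 - β) * c : ℝ) : EReal) := by
      intro w
      rw [hI hℓtop w]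
      exact iInf_congr fun β => iInf_congr fun hβ => by rw [← hcc, ← EReal.coe_mul]
    have hInn : ∀ w', 0 ≤ I w' := by
      intro w'
      rw [hI2]
      refine le_iInf fun β => le_iInf fun hβ => add_nonneg (hΥnn β w')
        (EReal.coe_nonneg.mpr (mul_nonneg (by linarith [hβ.2]) hc0))
    constructor
    · exact I_lsc_finite hΥnn (fun β w y hy => Upsilon_lsc hΥ' hy) c hc0 I hI2
    · intro x y a b ha0 hb0 hab
      rcases eq_or_lt_of_le ha0 with ha | ha
      · have hb1 : b = 1 := by linarith
        subst hb1
        rw [← ha]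
        simp
      rcases eq_or_lt_of_le hb0 with hb | hb
      · have ha1 : a = 1 := by linarith
        subst ha1
        rw [← hb]
        simp
      refine EReal.le_of_forall_lt_iff_le.mp fun z hz => ?_
      have hIxnn := hInn x
      have hIynn := hInn y
      have hIxtop : I x ≠ ⊤ := by
        intro h
        rw [h, EReal.coe_mul_top_of_pos ha, EReal.top_add_of_ne_bot
          (ne_bot_of_le_ne_bot (by simp) (mul_nonneg (EReal.coe_nonneg.mpr hb0) hIynn))] at hz
        exact not_top_lt hz
      have hIytop : I y ≠ ⊤ := by
        intro h
        rw [h, EReal.coe_mul_top_of_pos hb, EReal.add_top_of_ne_bot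
          (ne_bot_of_le_ne_bot (by simp) (mul_nonneg (EReal.coe_nonneg.mpr ha0) hIxnn))] at hz
        exact not_top_lt hz
      have hIxbot : I x ≠ ⊥ := ne_bot_of_le_ne_bot (by simp) hIxnn
      have hIybot : I y ≠ ⊥ := ne_bot_of_le_ne_bot (by simp) hIynn
      set x₀ : ℝ := (I x).toReal with hx₀def
      set y₀ : ℝ := (I y).toReal with hy₀def
      have hx₀ : (x₀ : EReal) = I x := EReal.coe_toReal hIxtop hIxbot
      have hy₀ : (y₀ : EReal) = I y := EReal.coe_toReal hIytop hIybot
      rw [← hx₀, ← hy₀, ← EReal.coe_mul, ← EReal.coe_mul, ← EReal.coe_add,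
        EReal.coe_lt_coe_iff] at hz
      set ε : ℝ := (z - (a * x₀ + b * y₀)) / 2 with hεdef
      have hε : 0 < ε := by simp only [hεdef]; linarith
      have h1 : I x < ((x₀ + ε : ℝ) : EReal) := by
        rw [← hx₀]; exact EReal.coe_lt_coe_iff.mpr (by linarith)
      have h2 : I y < ((y₀ + ε : ℝ) : EReal) := by
        rw [← hy₀]; exact EReal.coe_lt_coe_iff.mpr (by linarith)
      rw [hI2 x] at h1
      rw [hI2 y] at h2
      obtain ⟨β1, h1⟩ := iInf_lt_iff.mp h1
      obtain ⟨hβ1, h1⟩ := iInf_lt_iff.mp h1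
      obtain ⟨β2, h2⟩ := iInf_lt_iff.mp h2
      obtain ⟨hβ2, h2⟩ := iInf_lt_iff.mp h2
      obtain ⟨hβ1a, hβ1b⟩ := hβ1
      obtain ⟨hβ2a, hβ2b⟩ := hβ2
      have hβc : a * β1 + b * β2 ∈ Set.Icc (0:ℝ) 1 := by
        constructor
        · positivity
        · nlinarith
      -- the values `Υ β1 x` and `Υ β2 y` are finite
      have hU1top : Υ β1 x ≠ ⊤ := by
        intro h
        rw [h, EReal.top_add_of_ne_bot (EReal.coe_ne_bot _)] at h1
        exact not_top_lt h1
      have hU2top : Υ β2 y ≠ ⊤ := by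
        intro h
        rw [h, EReal.top_add_of_ne_bot (EReal.coe_ne_bot _)] at h2
        exact not_top_lt h2
      have hU1bot : Υ β1 x ≠ ⊥ := ne_bot_of_le_ne_bot (by simp) (hΥnn β1 x)
      have hU2bot : Υ β2 y ≠ ⊥ := ne_bot_of_le_ne_bot (by simp) (hΥnn β2 y)
      set u1 : ℝ := (Υ β1 x).toReal with hu1def
      set u2 : ℝ := (Υ β2 y).toReal with hu2def
      have hu1 : (u1 : EReal) = Υ β1 x := EReal.coe_toReal hU1top hU1bot
      have hu2 : (u2 : EReal) = Υ β2 y := EReal.coe_toReal hU2top hU2bot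
      rw [← hu1, ← EReal.coe_add, EReal.coe_lt_coe_iff] at h1
      rw [← hu2, ← EReal.coe_add, EReal.coe_lt_coe_iff] at h2
      calc I (a • x + b • y)
          ≤ Υ (a * β1 + b * β2) (a • x + b • y) +
              (((1 - (a * β1 + b * β2)) * c : ℝ) : EReal) := by
            rw [hI2]
            exact iInf₂_le _ hβc
        _ ≤ ((a : EReal) * Υ β1 x + (b : EReal) * Υ β2 y) +
              (((1 - (a * β1 + b * β2)) * c : ℝ) : EReal) :=
            add_le_add (Upsilon_convex hΥ' hJnn hJconv β1 β2 x y ha hb hab) le_rfl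
        _ = ((a * u1 + b * u2 + (1 - (a * β1 + b * β2)) * c : ℝ) : EReal) := by
            rw [← hu1, ← hu2, ← EReal.coe_mul, ← EReal.coe_mul, ← EReal.coe_add,
              ← EReal.coe_add]
        _ ≤ (z : EReal) := by
            refine EReal.coe_le_coe_iff.mpr ?_
            have hid : a * u1 + b * u2 + (1 - (a * β1 + b * β2)) * c =
                a * (u1 + (1 - β1) * c) + b * (u2 + (1 - β2) * c) := by
              linear_combination (-c) * hab
            have hm1 := mul_lt_mul_of_pos_left h1 ha
            have hm2 := mul_lt_mul_of_pos_left h2 hb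
            have hεab : a * ε + b * ε = ε := by rw [← add_mul, hab, one_mul]
            nlinarith
end

section
/- The function φ defined on ℝ^d by φ(k) := sup{ζ ∈ ℝ : E[e^{ζ S_1 + k·X_1}] ≤ 1} (where the supremum of the empty set is −∞) is upper semicontinuous and concave. -/
open MeasureTheory ProbabilityTheory Filter RealInnerProductSpace

open Topology ENNReal

/-- The function `φ(k) := sup {ζ : E[exp(ζ S 1 + k ⬝ X 1)] ≤ 1}` (with `sup ∅ = -∞`)
is upper semicontinuous and concave. -/
theorem phi_upperSemicontinuous_concave
    {Ω : Type*} [MeasurableSpace Ω] (P : Measure Ω) [IsProbabilityMeasure P]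
    (d : ℕ) (hd : 1 ≤ d)
    (S₁ : Ω → ℝ) (X₁ : Ω → EuclideanSpace ℝ (Fin d))
    -- the waiting time is nonnegative and not concentrated at zero
    (hSnn : ∀ ω, 0 ≤ S₁ ω)
    (hSmeas : Measurable S₁) (hXmeas : Measurable X₁)
    (hS0 : P {ω | S₁ ω = 0} < 1)
    -- φ(k) := sup {ζ ∈ ℝ : E[exp(ζ S₁ + k ⬝ X₁)] ≤ 1}, the sup of the empty set being ⊥
    (φ : EuclideanSpace ℝ (Fin d) → EReal)
    (hφ : ∀ k, φ k = sSup ((fun ζ : ℝ => (ζ : EReal)) ''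
      {ζ : ℝ | ∫⁻ ω, ENNReal.ofReal (Real.exp (ζ * S₁ ω + ⟪k, X₁ ω⟫)) ∂P ≤ 1})) :
    -- conclusion: φ is upper semicontinuous and concave
    UpperSemicontinuous φ ∧
      ∀ x y : EuclideanSpace ℝ (Fin d), ∀ a b : ℝ, 0 ≤ a → 0 ≤ b → a + b = 1 →
        ((a : ℝ) : EReal) * φ x + ((b : ℝ) : EReal) * φ y ≤ φ (a • x + b • y) := by
  classical
  -- notation
  set Λ : ℝ → EuclideanSpace ℝ (Fin d) → ℝ≥0∞ :=
    fun ζ k => ∫⁻ ω, ENNReal.ofReal (Real.exp (ζ * S₁ ω + ⟪k, X₁ ω⟫)) ∂P with hΛ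
  have hφ' : ∀ k, φ k = sSup ((fun ζ : ℝ => (ζ : EReal)) '' {ζ : ℝ | Λ ζ k ≤ 1}) := hφ
  -- measurability of the integrand
  have hmeas : ∀ (ζ : ℝ) (k : EuclideanSpace ℝ (Fin d)),
      Measurable fun ω => ENNReal.ofReal (Real.exp (ζ * S₁ ω + ⟪k, X₁ ω⟫)) := by
    intro ζ k
    exact (((measurable_const.mul hSmeas).add (measurable_const.inner hXmeas)).exp).ennreal_ofReal
  -- monotonicity in ζ
  have hmono : ∀ (k : EuclideanSpace ℝ (Fin d)) {ζ ζ' : ℝ}, ζ ≤ ζ' → Λ ζ k ≤ Λ ζ' k := by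
    intro k ζ ζ' h
    refine lintegral_mono fun ω => ENNReal.ofReal_le_ofReal (Real.exp_le_exp.2 ?_)
    have := hSnn ω
    nlinarith
  -- if ζ is infeasible at k, then φ k ≤ ζ
  have key : ∀ (k : EuclideanSpace ℝ (Fin d)) (ζ : ℝ), 1 < Λ ζ k → φ k ≤ (ζ : EReal) := by
    intro k ζ h
    rw [hφ' k]
    refine sSup_le ?_
    rintro _ ⟨ζ', hζ', rfl⟩
    rw [EReal.coe_le_coe_iff]
    by_contra hlt
    push_neg at hlt
    exact absurd (le_trans (hmono k hlt.le) hζ') (not_le.2 h)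
  -- if φ k < ζ, then ζ is infeasible at k
  have key' : ∀ (k : EuclideanSpace ℝ (Fin d)) (ζ : ℝ), φ k < (ζ : EReal) → 1 < Λ ζ k := by
    intro k ζ h
    by_contra hc
    push_neg at hc
    have : (ζ : EReal) ≤ φ k := by
      rw [hφ' k]; exact le_sSup ⟨ζ, hc, rfl⟩
    exact absurd (lt_of_le_of_lt this h) (lt_irrefl _)
  constructor
  · -- upper semicontinuity
    intro k₀ y hy
    obtain ⟨ζ, h1, h2⟩ := EReal.exists_between_coe_real hy
    have hI : 1 < Λ ζ k₀ := key' k₀ ζ h1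
    have hev : ∀ᶠ k in 𝓝 k₀, 1 < Λ ζ k := by
      by_contra hc
      rw [Filter.not_eventually] at hc
      simp only [not_lt] at hc
      obtain ⟨ks, hks, hks'⟩ := Filter.exists_seq_forall_of_frequently hc
      -- Fatou's lemma
      have hten : ∀ ω, Tendsto (fun n => ENNReal.ofReal (Real.exp (ζ * S₁ ω + ⟪ks n, X₁ ω⟫)))
          atTop (𝓝 (ENNReal.ofReal (Real.exp (ζ * S₁ ω + ⟪k₀, X₁ ω⟫)))) := by
        intro ω
        have h1' : Tendsto (fun n => ⟪ks n, X₁ ω⟫) atTop (𝓝 ⟪k₀, X₁ ω⟫) :=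
          ((continuous_id.inner continuous_const).tendsto k₀).comp hks
        have h2' : Tendsto (fun n => ζ * S₁ ω + ⟪ks n, X₁ ω⟫) atTop
            (𝓝 (ζ * S₁ ω + ⟪k₀, X₁ ω⟫)) := tendsto_const_nhds.add h1'
        exact (ENNReal.continuous_ofReal.tendsto _).comp ((Real.continuous_exp.tendsto _).comp h2')
      have hfatou := lintegral_liminf_le (fun n => hmeas ζ (ks n)) (μ := P) (u := atTop)
      have hlim : ∀ ω, liminf (fun n => ENNReal.ofReal (Real.exp (ζ * S₁ ω + ⟪ks n, X₁ ω⟫)))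
          atTop = ENNReal.ofReal (Real.exp (ζ * S₁ ω + ⟪k₀, X₁ ω⟫)) := fun ω => (hten ω).liminf_eq
      have hle : Λ ζ k₀ ≤ liminf (fun n => Λ ζ (ks n)) atTop := by
        rw [hΛ]
        calc ∫⁻ ω, ENNReal.ofReal (Real.exp (ζ * S₁ ω + ⟪k₀, X₁ ω⟫)) ∂P
            = ∫⁻ ω, liminf (fun n => ENNReal.ofReal (Real.exp (ζ * S₁ ω + ⟪ks n, X₁ ω⟫))) atTop ∂P := by
              exact lintegral_congr fun ω => (hlim ω).symm
          _ ≤ _ := hfatou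
      have hone : liminf (fun n => Λ ζ (ks n)) atTop ≤ 1 :=
        liminf_le_of_frequently_le (Frequently.of_forall hks')
      exact absurd (le_trans hle hone) (not_le.2 hI)
    exact hev.mono fun k hk => lt_of_le_of_lt (key k ζ hk) h2
  · -- concavity
    intro x y a b ha hb hab
    rcases ha.eq_or_lt with rfl | ha'
    · have hb1 : b = 1 := by linarith
      subst hb1
      simp
    rcases hb.eq_or_lt with rfl | hb'
    · have ha1 : a = 1 := by linarith
      subst ha1
      simp
    -- both a, b > 0
    by_cases hAx : {ζ : ℝ | Λ ζ x ≤ 1}.Nonempty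
    swap
    · rw [hφ' x, Set.not_nonempty_iff_eq_empty.1 hAx]
      simp only [Set.image_empty, sSup_empty]
      rw [EReal.mul_bot_of_pos (by exact_mod_cast ha'), EReal.bot_add]
      exact bot_le
    by_cases hAy : {ζ : ℝ | Λ ζ y ≤ 1}.Nonempty
    swap
    · rw [hφ' y, Set.not_nonempty_iff_eq_empty.1 hAy]
      simp only [Set.image_empty, sSup_empty]
      rw [EReal.mul_bot_of_pos (by exact_mod_cast hb'), EReal.add_bot]
      exact bot_le
    -- Hölder: combination of feasible points is feasible
    have holder : ∀ ζ₁ ζ₂ : ℝ, Λ ζ₁ x ≤ 1 → Λ ζ₂ y ≤ 1 → Λ (a * ζ₁ + b * ζ₂) (a • x + b • y) ≤ 1 := by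
      intro ζ₁ ζ₂ hz1 hz2
      have ha1 : a < 1 := by linarith
      have hpq : Real.HolderConjugate (1 / a) (1 / b) :=
        ⟨by rw [one_div, one_div, inv_inv, inv_inv, inv_one]; exact hab, by positivity, by positivity⟩
      set f : Ω → ℝ≥0∞ := fun ω => ENNReal.ofReal (Real.exp (a * (ζ₁ * S₁ ω + ⟪x, X₁ ω⟫))) with hf
      set g : Ω → ℝ≥0∞ := fun ω => ENNReal.ofReal (Real.exp (b * (ζ₂ * S₁ ω + ⟪y, X₁ ω⟫))) with hg
      have hfm : Measurable f :=
        (((measurable_const.mul ((measurable_const.mul hSmeas).add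
          (measurable_const.inner hXmeas))).exp)).ennreal_ofReal
      have hgm : Measurable g :=
        (((measurable_const.mul ((measurable_const.mul hSmeas).add
          (measurable_const.inner hXmeas))).exp)).ennreal_ofReal
      have hfp : ∀ ω, f ω ^ (1 / a) = ENNReal.ofReal (Real.exp (ζ₁ * S₁ ω + ⟪x, X₁ ω⟫)) := by
        intro ω
        rw [hf]
        rw [ENNReal.ofReal_rpow_of_pos (Real.exp_pos _), ← Real.exp_mul]
        congr 1
        field_simp
      have hgp : ∀ ω, g ω ^ (1 / b) = ENNReal.ofReal (Real.exp (ζ₂ * S₁ ω + ⟪y, X₁ ω⟫)) := by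
        intro ω
        rw [hg]
        rw [ENNReal.ofReal_rpow_of_pos (Real.exp_pos _), ← Real.exp_mul]
        congr 1
        field_simp
      have heq : ∀ ω, ENNReal.ofReal (Real.exp ((a * ζ₁ + b * ζ₂) * S₁ ω + ⟪a • x + b • y, X₁ ω⟫))
          = (f * g) ω := by
        intro ω
        have hin : ⟪a • x + b • y, X₁ ω⟫ = a * ⟪x, X₁ ω⟫ + b * ⟪y, X₁ ω⟫ := by
          rw [inner_add_left, real_inner_smul_left, real_inner_smul_left]
        simp only [Pi.mul_apply, hf, hg]
        rw [hin, ← ENNReal.ofReal_mul (Real.exp_pos _).le, ← Real.exp_add]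
        congr 1
        ring
      calc Λ (a * ζ₁ + b * ζ₂) (a • x + b • y) = ∫⁻ ω, (f * g) ω ∂P :=
            lintegral_congr heq
        _ ≤ (∫⁻ ω, f ω ^ (1 / a) ∂P) ^ (1 / (1 / a)) * (∫⁻ ω, g ω ^ (1 / b) ∂P) ^ (1 / (1 / b)) :=
            ENNReal.lintegral_mul_le_Lp_mul_Lq P hpq hfm.aemeasurable hgm.aemeasurable
        _ ≤ 1 := by
            rw [one_div_one_div, one_div_one_div]
            have h1' : (∫⁻ ω, f ω ^ (1 / a) ∂P) ^ a ≤ 1 := by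
              refine ENNReal.rpow_le_one ?_ ha
              rw [lintegral_congr hfp]; exact hz1
            have h2' : (∫⁻ ω, g ω ^ (1 / b) ∂P) ^ b ≤ 1 := by
              refine ENNReal.rpow_le_one ?_ hb
              rw [lintegral_congr hgp]; exact hz2
            calc _ ≤ (1 : ℝ≥0∞) * 1 := mul_le_mul' h1' h2'
              _ = 1 := one_mul 1
    -- main argument
    by_contra hcon
    push_neg at hcon
    obtain ⟨c, hc1, hc2⟩ := EReal.exists_between_coe_real hcon
    -- φ x, φ y are not ⊥
    have hxbot : φ x ≠ ⊥ := by
      obtain ⟨ζ, hζ⟩ := hAx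
      rw [hφ' x]
      exact ne_bot_of_le_ne_bot (EReal.coe_ne_bot ζ) (le_sSup ⟨ζ, hζ, rfl⟩)
    have hybot : φ y ≠ ⊥ := by
      obtain ⟨ζ, hζ⟩ := hAy
      rw [hφ' y]
      exact ne_bot_of_le_ne_bot (EReal.coe_ne_bot ζ) (le_sSup ⟨ζ, hζ, rfl⟩)
    -- find real t₁ < φ x, t₂ < φ y with c ≤ a t₁ + b t₂
    have hts : ∃ t₁ t₂ : ℝ, (t₁ : EReal) < φ x ∧ (t₂ : EReal) < φ y ∧ c ≤ a * t₁ + b * t₂ := by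
      rcases eq_top_or_lt_top (φ x) with hx | hx
      · rcases eq_top_or_lt_top (φ y) with hy' | hy'
        · exact ⟨c / a, 0, by rw [hx]; exact EReal.coe_lt_top _,
            by rw [hy']; exact EReal.coe_lt_top _, by rw [mul_zero, add_zero, mul_div_cancel₀ _ ha'.ne']⟩
        · lift φ y to ℝ using ⟨hy'.ne, hybot⟩ with ry hry
          refine ⟨(c - b * (ry - 1)) / a, ry - 1, by rw [hx]; exact EReal.coe_lt_top _,
            by exact_mod_cast (by linarith : ry - 1 < ry), ?_⟩
          rw [mul_div_cancel₀ _ ha'.ne']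
          linarith
      · lift φ x to ℝ using ⟨hx.ne, hxbot⟩ with rx hrx
        rcases eq_top_or_lt_top (φ y) with hy' | hy'
        · refine ⟨rx - 1, (c - a * (rx - 1)) / b, by exact_mod_cast (by linarith : rx - 1 < rx),
            by rw [hy']; exact EReal.coe_lt_top _, ?_⟩
          rw [mul_div_cancel₀ _ hb'.ne']
          linarith
        · lift φ y to ℝ using ⟨hy'.ne, hybot⟩ with ry hry
          have hc2' : c < a * rx + b * ry := by
            have : (c : EReal) < ((a * rx + b * ry : ℝ) : EReal) := by
              rw [EReal.coe_add, EReal.coe_mul, EReal.coe_mul]; exact hc2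
            exact_mod_cast this
          set ε : ℝ := a * rx + b * ry - c with hε
          refine ⟨rx - ε, ry - ε, by exact_mod_cast (by nlinarith : rx - ε < rx),
            by exact_mod_cast (by nlinarith : ry - ε < ry), by nlinarith⟩
    obtain ⟨t₁, t₂, ht₁, ht₂, htc⟩ := hts
    rw [hφ' x] at ht₁
    rw [hφ' y] at ht₂
    obtain ⟨_, ⟨ζ₁, hζ₁, rfl⟩, hζ₁'⟩ := lt_sSup_iff.1 ht₁
    obtain ⟨_, ⟨ζ₂, hζ₂, rfl⟩, hζ₂'⟩ := lt_sSup_iff.1 ht₂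
    rw [EReal.coe_lt_coe_iff] at hζ₁' hζ₂'
    have hfeas : Λ (a * ζ₁ + b * ζ₂) (a • x + b • y) ≤ 1 := holder ζ₁ ζ₂ hζ₁ hζ₂
    have hle : ((a * ζ₁ + b * ζ₂ : ℝ) : EReal) ≤ φ (a • x + b • y) := by
      rw [hφ' (a • x + b • y)]
      exact le_sSup ⟨a * ζ₁ + b * ζ₂, hfeas, rfl⟩
    have hcl : (c : EReal) < ((a * ζ₁ + b * ζ₂ : ℝ) : EReal) := by
      rw [EReal.coe_lt_coe_iff]
      nlinarith
    exact absurd (lt_trans (lt_of_lt_of_le hcl hle) hc1) (lt_irrefl _)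
end
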